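/- Completeness of the regular-expression encoding: with Π_R as constructed from regular expression R, if Π_R ∪ D ⊨ G(τ) for some dataset D over the EDB predicates F and A_σ (σ ∈ Σ), then there exists a word σ₁…σₙ ∈ L(R) such that F(τ−n) ∈ D and A_{σᵢ}(τ−n+i−1) ∈ D for each 1 ≤ i ≤ n. -/

import Mathlib

/-- A fact is either rigid (no time argument) or temporal (with a natural-number time). -/
inductive TFact (A : Type) where
  | rigid (p : A)
  | temporal (p : A) (t : ℕ)

/-- The predicate of a fact. -/
def TFact.pred {A : Type} : TFact A → A
  | .rigid p => p
  | .temporal p _ => p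

/-- A forward-propagating rule with a rigid head: all body atoms are rigid. -/
structure RigidRule (A : Type) where
  head : A
  body : List A

/-- A forward-propagating rule with temporal head `headPred` at time `t`:
temporal body atoms are at times `t - k` for offsets `k`, rigid body atoms as given.
Rules mention no concrete time points: they are instantiated at every admissible `t`. -/
structure FPRule (A : Type) where
  headPred : A
  tempBody : List (A × ℕ)
  rigidBody : List A

/-- Entailment (existence of a hyper-resolution derivation) from a program of
forward-propagating rules `(Pr, Pt)` together with a set of facts `F`. -/
inductive Entails {A : Type} (Pr : Set (RigidRule A)) (Pt : Set (FPRule A))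
    (F : Set (TFact A)) : TFact A → Prop where
  | fact {α : TFact A} : α ∈ F → Entails Pr Pt F α
  | rigid {r : RigidRule A} : r ∈ Pr →
      (∀ b ∈ r.body, Entails Pr Pt F (.rigid b)) →
      Entails Pr Pt F (.rigid r.head)
  | temp {r : FPRule A} (t : ℕ) : r ∈ Pt →
      (∀ p ∈ r.tempBody, p.2 ≤ t) →
      (∀ p ∈ r.tempBody, Entails Pr Pt F (.temporal p.1 (t - p.2))) →
      (∀ b ∈ r.rigidBody, Entails Pr Pt F (.rigid b)) →
      Entails Pr Pt F (.temporal r.headPred t)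

/-- Regular expressions over alphabet `σ`, with `plus` (one or more repetitions). -/
inductive RE (σ : Type) where
  | empty
  | eps
  | char (a : σ)
  | union (S T : RE σ)
  | concat (S T : RE σ)
  | plus (S : RE σ)

/-- The language of a regular expression. -/
inductive Lang {σ : Type} : RE σ → List σ → Prop where
  | eps : Lang .eps []
  | char (a : σ) : Lang (.char a) [a]
  | unionL {S T : RE σ} {w : List σ} : Lang S w → Lang (.union S T) w
  | unionR {S T : RE σ} {w : List σ} : Lang T w → Lang (.union S T) w
  | concat {S T : RE σ} {u v : List σ} :
      Lang S u → Lang T v → Lang (.concat S T) (u ++ v)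
  | plusOne {S : RE σ} {w : List σ} : Lang S w → Lang (.plus S) w
  | plusMore {S : RE σ} {u v : List σ} :
      Lang S u → Lang (.plus S) v → Lang (.plus S) (u ++ v)

/-- Predicates of the program `Π_R`: copies of `F` and `G` indexed by a path
(the path records the renaming-apart of subprograms), and the EDB predicates
`A_σ`, which are never renamed. -/
inductive RPred (σ : Type) where
  | F (path : List Bool)
  | G (path : List Bool)
  | A (a : σ)

/-- Renaming of predicates: every predicate other than the `A_σ` is renamed to
a fresh copy (tagged by `b`). -/
def ren {σ : Type} (b : Bool) : RPred σ → RPred σ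
  | .F p => .F (b :: p)
  | .G p => .G (b :: p)
  | .A a => .A a

/-- Apply a predicate renaming to a rule. -/
def mapRule {A B : Type} (f : A → B) (r : FPRule A) : FPRule B :=
  ⟨f r.headPred, r.tempBody.map (fun p => (f p.1, p.2)), r.rigidBody.map f⟩

/-- A linking rule `b(t) → h(t)`. -/
def link {σ : Type} (h b : RPred σ) : FPRule (RPred σ) := ⟨h, [(b, 0)], []⟩

/-- The inductive construction of the program `Π_R` from a regular expression:
`∅` gives the empty program; `σ` gives `F(t) ∧ A_σ(t) → G(t+1)`; `ε` gives
`F(t) → G(t)`; union, concatenation and plus rename the subprograms apart and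
add the linking rules. -/
def prog {σ : Type} : RE σ → Set (FPRule (RPred σ))
  | .empty => ∅
  | .char a => {⟨.G [], [(.F [], 1), (.A a, 1)], []⟩}
  | .eps => {link (.G []) (.F [])}
  | .union S T =>
      (mapRule (ren false) '' prog S) ∪ (mapRule (ren true) '' prog T) ∪
      {link (.F [false]) (.F []), link (.F [true]) (.F []),
       link (.G []) (.G [false]), link (.G []) (.G [true])}
  | .concat S T =>
      (mapRule (ren false) '' prog S) ∪ (mapRule (ren true) '' prog T) ∪
      {link (.F [false]) (.F []), link (.F [true]) (.G [false]),
       link (.G []) (.G [true])}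
  | .plus S =>
      (mapRule (ren false) '' prog S) ∪
      {link (.F [false]) (.F []), link (.F [false]) (.G [false]),
       link (.G []) (.G [false])}

/-! ### Auxiliary development for the completeness proof -/

/-- Fuelled entailment: a derivation of depth at most `n`. -/
inductive EN {A : Type} (Pt : Set (FPRule A)) (D : Set (TFact A)) : ℕ → TFact A → Prop
  | fact {n : ℕ} {α : TFact A} : α ∈ D → EN Pt D n α
  | temp {n : ℕ} {r : FPRule A} (t : ℕ) : r ∈ Pt →
      (∀ p ∈ r.tempBody, p.2 ≤ t) →
      (∀ p ∈ r.tempBody, EN Pt D n (.temporal p.1 (t - p.2))) →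
      r.rigidBody = [] →
      EN Pt D (n + 1) (.temporal r.headPred t)

lemma EN.mono {A : Type} {Pt : Set (FPRule A)} {D : Set (TFact A)} {n : ℕ} {α : TFact A}
    (h : EN Pt D n α) : ∀ m, n ≤ m → EN Pt D m α := by
  induction h with
  | fact h => exact fun m _ => .fact h
  | temp t hr hb hbody hrg ih =>
      intro m hm
      cases m with
      | zero => omega
      | succ m => exact .temp t hr hb (fun p hp => ih p hp m (by omega)) hrg

lemma noRigid {A : Type} {Pt : Set (FPRule A)} {D : Set (TFact A)}
    (hD : ∀ f ∈ D, ∃ (p : A) (t : ℕ), f = TFact.temporal p t) {c : A}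
    (h : Entails (∅ : Set (RigidRule A)) Pt D (.rigid c)) : False := by
  cases h with
  | fact hf =>
      obtain ⟨p, t, ht⟩ := hD _ hf
      simp at ht
  | rigid hr _ => exact absurd hr (Set.notMem_empty _)

lemma listMax {A B : Type} {Pt : Set (FPRule A)} {D : Set (TFact A)} {l : List B}
    {f : B → TFact A} (h : ∀ b ∈ l, ∃ n, EN Pt D n (f b)) :
    ∃ N, ∀ b ∈ l, EN Pt D N (f b) := by
  induction l with
  | nil => exact ⟨0, by simp⟩
  | cons c l ih =>
      obtain ⟨n, hn⟩ := h c (by simp)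
      obtain ⟨N, hN⟩ := ih (fun b hb => h b (by simp [hb]))
      refine ⟨max n N, ?_⟩
      rintro b hb
      rcases List.mem_cons.1 hb with rfl | hb
      · exact hn.mono _ (le_max_left _ _)
      · exact (hN b hb).mono _ (le_max_right _ _)

lemma toEN {A : Type} {Pt : Set (FPRule A)} {D : Set (TFact A)}
    (hD : ∀ f ∈ D, ∃ (p : A) (t : ℕ), f = TFact.temporal p t) {α : TFact A}
    (h : Entails (∅ : Set (RigidRule A)) Pt D α) : ∃ n, EN Pt D n α := by
  induction h with
  | fact h => exact ⟨0, .fact h⟩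
  | rigid hr _ _ => exact absurd hr (Set.notMem_empty _)
  | @temp r t hr hb hbody hrb ihb ihr =>
      have hrig : r.rigidBody = [] := by
        cases hl : r.rigidBody with
        | nil => rfl
        | cons c l =>
            exact absurd (hrb c (by rw [hl]; exact List.mem_cons_self))
              (fun h => noRigid hD h)
      obtain ⟨N, hN⟩ := listMax (f := fun p : A × ℕ => TFact.temporal p.1 (t - p.2)) ihb
      exact ⟨N + 1, .temp t hr hb hN hrig⟩

lemma ofEN {A : Type} {Pt : Set (FPRule A)} {D : Set (TFact A)} {n : ℕ} {α : TFact A}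
    (h : EN Pt D n α) : Entails (∅ : Set (RigidRule A)) Pt D α := by
  induction h with
  | fact h => exact .fact h
  | temp t hr hb _ hrg ih => exact .temp t hr hb ih (by simp [hrg])

lemma Entails.monoD {A : Type} {Pr : Set (RigidRule A)} {Pt : Set (FPRule A)}
    {D D' : Set (TFact A)} (hsub : D ⊆ D') {α : TFact A}
    (h : Entails Pr Pt D α) : Entails Pr Pt D' α := by
  induction h with
  | fact h => exact .fact (hsub h)
  | rigid hr _ ih => exact .rigid hr ih
  | temp t hr hb _ _ ih ihr => exact .temp t hr hb ih ihr

lemma ren_inj {σ : Type} {b : Bool} {p q : RPred σ} (h : ren b p = ren b q) : p = q := by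
  cases p <;> cases q <;> simp_all [ren]

lemma prog_head {σ : Type} (R : RE σ) :
    ∀ r ∈ prog R, (∃ pth, r.headPred = RPred.F pth ∧ pth ≠ []) ∨
      (∃ pth, r.headPred = RPred.G pth) := by
  induction R with
  | empty => intro r hr; simp [prog] at hr
  | eps => intro r hr; simp [prog] at hr; subst hr; right; exact ⟨[], rfl⟩
  | char a => intro r hr; simp [prog] at hr; subst hr; right; exact ⟨[], rfl⟩
  | union S T ihS ihT =>
      intro r hr
      simp only [prog, Set.mem_union, Set.mem_image, Set.mem_insert_iff,
        Set.mem_singleton_iff] at hr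
      rcases hr with ((⟨r', hr', rfl⟩ | ⟨r', hr', rfl⟩) | h | h | h | h)
      · rcases ihS r' hr' with ⟨pth, hp, _⟩ | ⟨pth, hp⟩ <;>
          simp [mapRule, hp, ren]
      · rcases ihT r' hr' with ⟨pth, hp, _⟩ | ⟨pth, hp⟩ <;>
          simp [mapRule, hp, ren]
      all_goals subst h
      · exact Or.inl ⟨[false], rfl, by simp⟩
      · exact Or.inl ⟨[true], rfl, by simp⟩
      · exact Or.inr ⟨[], rfl⟩
      · exact Or.inr ⟨[], rfl⟩
  | concat S T ihS ihT =>
      intro r hr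
      simp only [prog, Set.mem_union, Set.mem_image, Set.mem_insert_iff,
        Set.mem_singleton_iff] at hr
      rcases hr with ((⟨r', hr', rfl⟩ | ⟨r', hr', rfl⟩) | h | h | h)
      · rcases ihS r' hr' with ⟨pth, hp, _⟩ | ⟨pth, hp⟩ <;>
          simp [mapRule, hp, ren]
      · rcases ihT r' hr' with ⟨pth, hp, _⟩ | ⟨pth, hp⟩ <;>
          simp [mapRule, hp, ren]
      all_goals subst h
      · exact Or.inl ⟨[false], rfl, by simp⟩
      · exact Or.inl ⟨[true], rfl, by simp⟩
      · exact Or.inr ⟨[], rfl⟩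
  | plus S ihS =>
      intro r hr
      simp only [prog, Set.mem_union, Set.mem_image, Set.mem_insert_iff,
        Set.mem_singleton_iff] at hr
      rcases hr with (⟨r', hr', rfl⟩ | h | h | h)
      · rcases ihS r' hr' with ⟨pth, hp, _⟩ | ⟨pth, hp⟩ <;>
          simp [mapRule, hp, ren]
      all_goals subst h
      · exact Or.inl ⟨[false], rfl, by simp⟩
      · exact Or.inl ⟨[false], rfl, by simp⟩
      · exact Or.inr ⟨[], rfl⟩

/-- Atoms whose predicate is never a head must be facts. -/
lemma EN_fact_of_nohead {A : Type} {Pt : Set (FPRule A)} {D : Set (TFact A)} {n : ℕ}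
    {α : TFact A} (h : EN Pt D n α)
    (hn : ∀ r ∈ Pt, ∀ t : ℕ, α ≠ .temporal r.headPred t) : α ∈ D := by
  cases h with
  | fact h => exact h
  | temp t hr _ _ _ => exact absurd rfl (hn _ hr t)

lemma EN_F_nil {σ : Type} {R : RE σ} {D : Set (TFact (RPred σ))} {n t : ℕ}
    (h : EN (prog R) D n (.temporal (RPred.F []) t)) :
    TFact.temporal (RPred.F []) t ∈ D := by
  refine EN_fact_of_nohead h ?_
  intro r hr t' heq
  rcases prog_head R r hr with ⟨pth, hp, hne⟩ | ⟨pth, hp⟩ <;> rw [hp] at heq <;>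
    simp at heq
  exact hne heq.1

lemma EN_A {σ : Type} {R : RE σ} {D : Set (TFact (RPred σ))} {n t : ℕ} {a : σ}
    (h : EN (prog R) D n (.temporal (RPred.A a) t)) :
    TFact.temporal (RPred.A a) t ∈ D := by
  refine EN_fact_of_nohead h ?_
  intro r hr t' heq
  rcases prog_head R r hr with ⟨pth, hp, hne⟩ | ⟨pth, hp⟩ <;> rw [hp] at heq <;>
    simp at heq

/-- The translated dataset used to de-rename a subprogram. -/
def Dp {σ : Type} (W : Set (FPRule (RPred σ))) (b : Bool) (D : Set (TFact (RPred σ)))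
    (n : ℕ) : Set (TFact (RPred σ)) :=
  {f | (∃ (a : σ) (t : ℕ), f = TFact.temporal (RPred.A a) t ∧ f ∈ D) ∨
       (∃ (t m : ℕ), m ≤ n ∧ f = TFact.temporal (RPred.F []) t ∧
          EN W D m (.temporal (RPred.F [b]) t))}

lemma Dp_mono {σ : Type} {W : Set (FPRule (RPred σ))} {b : Bool}
    {D : Set (TFact (RPred σ))} {n m : ℕ} (h : n ≤ m) : Dp W b D n ⊆ Dp W b D m := by
  rintro f (hf | ⟨t, k, hk, hf, hEN⟩)
  · exact Or.inl hf
  · exact Or.inr ⟨t, k, le_trans hk h, hf, hEN⟩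

lemma Dp_hD {σ : Type} {W : Set (FPRule (RPred σ))} {b : Bool}
    {D : Set (TFact (RPred σ))} {n : ℕ} :
    ∀ f ∈ Dp W b D n, ∃ t : ℕ,
      f = TFact.temporal (RPred.F []) t ∨ ∃ a : σ, f = TFact.temporal (RPred.A a) t := by
  rintro f (⟨a, t, rfl, _⟩ | ⟨t, m, _, rfl, _⟩)
  · exact ⟨t, Or.inr ⟨a, rfl⟩⟩
  · exact ⟨t, Or.inl rfl⟩

lemma Dp_F {σ : Type} {W : Set (FPRule (RPred σ))} {b : Bool}
    {D : Set (TFact (RPred σ))} {n t : ℕ}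
    (h : TFact.temporal (RPred.F ([] : List Bool)) t ∈ Dp W b D n) :
    ∃ m, m ≤ n ∧ EN W D m (.temporal (RPred.F [b]) t) := by
  rcases h with ⟨a, t', heq, _⟩ | ⟨t', m, hmn, heq, hEN⟩
  · simp at heq
  · injection heq with h1 h2
    injection h1 with h1'
    subst h2
    exact ⟨m, hmn, hEN⟩

lemma Dp_A {σ : Type} {W : Set (FPRule (RPred σ))} {b : Bool}
    {D : Set (TFact (RPred σ))} {n t : ℕ} {a : σ}
    (h : TFact.temporal (RPred.A a) t ∈ Dp W b D n) :
    TFact.temporal (RPred.A a) t ∈ D := by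
  rcases h with ⟨a', t', heq, hfD⟩ | ⟨t', m, _, heq, _⟩
  · exact hfD
  · simp at heq

/-- De-renaming lemma: a derivation of a renamed atom in the big program gives a
derivation of the original atom in the subprogram over the translated dataset. -/
lemma unren {σ : Type} {S : RE σ} {W : Set (FPRule (RPred σ))} {b : Bool}
    {D : Set (TFact (RPred σ))}
    (hD : ∀ f ∈ D, ∃ t : ℕ,
      f = TFact.temporal (RPred.F []) t ∨ ∃ a : σ, f = TFact.temporal (RPred.A a) t)
    (hW : ∀ r ∈ W, (∃ r' ∈ prog S, r = mapRule (ren b) r') ∨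
      r.headPred = RPred.F [b] ∨ ∀ p : RPred σ, r.headPred ≠ ren b p)
    {n : ℕ} {α : TFact (RPred σ)} (h : EN W D n α) :
    ∀ p t, α = TFact.temporal (ren b p) t →
      Entails (∅ : Set (RigidRule (RPred σ))) (prog S) (Dp W b D n) (.temporal p t) := by
  induction h with
  | @fact n α hm =>
      rintro p t rfl
      cases p with
      | F path =>
          exfalso
          obtain ⟨t', h'⟩ := hD _ hm
          rcases h' with h' | ⟨a, h'⟩ <;> simp [ren] at h'
      | G path =>
          exfalso
          obtain ⟨t', h'⟩ := hD _ hm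
          rcases h' with h' | ⟨a, h'⟩ <;> simp [ren] at h'
      | A a' => exact .fact (Or.inl ⟨a', t, rfl, hm⟩)
  | @temp n r t0 hr hb hbody hrg ih =>
      intro p t heq
      have hhead : r.headPred = ren b p := by
        injection heq with h1 h2
      have ht : t0 = t := by
        injection heq with h1 h2
      subst ht
      rcases hW r hr with ⟨r', hr', rfl⟩ | hF | hne
      · have hph : r'.headPred = p := ren_inj (by
          simpa [mapRule] using hhead)
        subst hph
        refine Entails.temp t0 hr' ?_ ?_ ?_
        · intro q hq
          have hmem : (ren b q.1, q.2) ∈ (mapRule (ren b) r').tempBody := by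
            simpa [mapRule] using
              List.mem_map_of_mem (f := fun p : RPred σ × ℕ => (ren b p.1, p.2)) hq
          exact hb (ren b q.1, q.2) hmem
        · intro q hq
          have hmem : (ren b q.1, q.2) ∈ (mapRule (ren b) r').tempBody := by
            simpa [mapRule] using
              List.mem_map_of_mem (f := fun p : RPred σ × ℕ => (ren b p.1, p.2)) hq
          have := ih (ren b q.1, q.2) hmem q.1 (t0 - q.2) rfl
          exact this.monoD (Dp_mono (Nat.le_succ n))
        · intro c hc
          exfalso
          have : (mapRule (ren b) r').rigidBody = [] := hrg
          simp [mapRule] at this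
          rw [this] at hc
          simp at hc
      · have hren : ren b p = RPred.F [b] := by rw [← hF, hhead]
        have hpF : p = RPred.F [] := by
          cases p <;> simp [ren] at hren <;> simp [hren]
        subst hpF
        refine .fact (Or.inr ⟨t0, n + 1, le_refl _, rfl, ?_⟩)
        have := EN.temp (Pt := W) (D := D) t0 hr hb hbody hrg
        rwa [hF] at this
      · exact absurd hhead (hne p)

lemma hD_temp {σ : Type} {D : Set (TFact (RPred σ))}
    (hD : ∀ f ∈ D, ∃ t : ℕ,
      f = TFact.temporal (RPred.F []) t ∨ ∃ a : σ, f = TFact.temporal (RPred.A a) t) :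
    ∀ f ∈ D, ∃ (p : RPred σ) (t : ℕ), f = TFact.temporal p t := by
  intro f hf
  obtain ⟨t, h | ⟨a, h⟩⟩ := hD f hf
  · exact ⟨_, _, h⟩
  · exact ⟨_, _, h⟩

/-- Generic inversion for fuelled derivations of temporal atoms. -/
lemma inv_head {A : Type} {Pt : Set (FPRule A)} {D : Set (TFact A)} {n : ℕ}
    {pred : A} {t : ℕ} (h : EN Pt D n (.temporal pred t)) :
    TFact.temporal pred t ∈ D ∨ ∃ m, m < n ∧ ∃ r ∈ Pt, r.headPred = pred ∧
      (∀ p ∈ r.tempBody, p.2 ≤ t) ∧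
      (∀ p ∈ r.tempBody, EN Pt D m (.temporal p.1 (t - p.2))) := by
  cases h with
  | fact hf => exact Or.inl hf
  | temp t hr hb hbody hrg => exact Or.inr ⟨_, Nat.lt_succ_self _, _, hr, rfl, hb, hbody⟩

/-! #### The `hW` side conditions of `unren` for each construction -/

lemma hW_union_left {σ : Type} (S T : RE σ) :
    ∀ r ∈ prog (.union S T), (∃ r' ∈ prog S, r = mapRule (ren false) r') ∨
      r.headPred = RPred.F [false] ∨ ∀ p : RPred σ, r.headPred ≠ ren false p := by
  intro r hr
  simp only [prog, Set.mem_union, Set.mem_image, Set.mem_insert_iff,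
    Set.mem_singleton_iff] at hr
  rcases hr with ((⟨r', hr', rfl⟩ | ⟨r', hr', rfl⟩) | h | h | h | h)
  · exact Or.inl ⟨r', hr', rfl⟩
  · refine Or.inr (Or.inr ?_)
    rcases prog_head T r' hr' with ⟨pth, hp, _⟩ | ⟨pth, hp⟩ <;>
      rintro (path | path | a) hcon <;> simp [mapRule, hp, ren] at hcon
  · exact h ▸ Or.inr (Or.inl rfl)
  all_goals subst h
  all_goals refine Or.inr (Or.inr ?_)
  all_goals rintro (path | path | a) hcon <;> simp [link, ren] at hcon

lemma hW_union_right {σ : Type} (S T : RE σ) :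
    ∀ r ∈ prog (.union S T), (∃ r' ∈ prog T, r = mapRule (ren true) r') ∨
      r.headPred = RPred.F [true] ∨ ∀ p : RPred σ, r.headPred ≠ ren true p := by
  intro r hr
  simp only [prog, Set.mem_union, Set.mem_image, Set.mem_insert_iff,
    Set.mem_singleton_iff] at hr
  rcases hr with ((⟨r', hr', rfl⟩ | ⟨r', hr', rfl⟩) | h | h | h | h)
  · refine Or.inr (Or.inr ?_)
    rcases prog_head S r' hr' with ⟨pth, hp, _⟩ | ⟨pth, hp⟩ <;>
      rintro (path | path | a) hcon <;> simp [mapRule, hp, ren] at hcon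
  · exact Or.inl ⟨r', hr', rfl⟩
  · subst h
    refine Or.inr (Or.inr ?_)
    rintro (path | path | a) hcon <;> simp [link, ren] at hcon
  · exact h ▸ Or.inr (Or.inl rfl)
  all_goals subst h
  all_goals refine Or.inr (Or.inr ?_)
  all_goals rintro (path | path | a) hcon <;> simp [link, ren] at hcon

lemma hW_concat_left {σ : Type} (S T : RE σ) :
    ∀ r ∈ prog (.concat S T), (∃ r' ∈ prog S, r = mapRule (ren false) r') ∨
      r.headPred = RPred.F [false] ∨ ∀ p : RPred σ, r.headPred ≠ ren false p := by
  intro r hr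
  simp only [prog, Set.mem_union, Set.mem_image, Set.mem_insert_iff,
    Set.mem_singleton_iff] at hr
  rcases hr with ((⟨r', hr', rfl⟩ | ⟨r', hr', rfl⟩) | h | h | h)
  · exact Or.inl ⟨r', hr', rfl⟩
  · refine Or.inr (Or.inr ?_)
    rcases prog_head T r' hr' with ⟨pth, hp, _⟩ | ⟨pth, hp⟩ <;>
      rintro (path | path | a) hcon <;> simp [mapRule, hp, ren] at hcon
  · exact h ▸ Or.inr (Or.inl rfl)
  all_goals subst h
  all_goals refine Or.inr (Or.inr ?_)
  all_goals rintro (path | path | a) hcon <;> simp [link, ren] at hcon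

lemma hW_concat_right {σ : Type} (S T : RE σ) :
    ∀ r ∈ prog (.concat S T), (∃ r' ∈ prog T, r = mapRule (ren true) r') ∨
      r.headPred = RPred.F [true] ∨ ∀ p : RPred σ, r.headPred ≠ ren true p := by
  intro r hr
  simp only [prog, Set.mem_union, Set.mem_image, Set.mem_insert_iff,
    Set.mem_singleton_iff] at hr
  rcases hr with ((⟨r', hr', rfl⟩ | ⟨r', hr', rfl⟩) | h | h | h)
  · refine Or.inr (Or.inr ?_)
    rcases prog_head S r' hr' with ⟨pth, hp, _⟩ | ⟨pth, hp⟩ <;>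
      rintro (path | path | a) hcon <;> simp [mapRule, hp, ren] at hcon
  · exact Or.inl ⟨r', hr', rfl⟩
  · subst h
    refine Or.inr (Or.inr ?_)
    rintro (path | path | a) hcon <;> simp [link, ren] at hcon
  · exact h ▸ Or.inr (Or.inl rfl)
  · subst h
    refine Or.inr (Or.inr ?_)
    rintro (path | path | a) hcon <;> simp [link, ren] at hcon

lemma hW_plus {σ : Type} (S : RE σ) :
    ∀ r ∈ prog (.plus S), (∃ r' ∈ prog S, r = mapRule (ren false) r') ∨
      r.headPred = RPred.F [false] ∨ ∀ p : RPred σ, r.headPred ≠ ren false p := by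
  intro r hr
  simp only [prog, Set.mem_union, Set.mem_image, Set.mem_insert_iff,
    Set.mem_singleton_iff] at hr
  rcases hr with (⟨r', hr', rfl⟩ | h | h | h)
  · exact Or.inl ⟨r', hr', rfl⟩
  · exact h ▸ Or.inr (Or.inl rfl)
  · exact h ▸ Or.inr (Or.inl rfl)
  · subst h
    refine Or.inr (Or.inr ?_)
    rintro (path | path | a) hcon <;> simp [link, ren] at hcon

/-! #### Inversion lemmas on the specific programs -/

lemma inv_G_union {σ : Type} {S T : RE σ} {D : Set (TFact (RPred σ))}
    (hD : ∀ f ∈ D, ∃ t : ℕ,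
      f = TFact.temporal (RPred.F []) t ∨ ∃ a : σ, f = TFact.temporal (RPred.A a) t)
    {n τ : ℕ} (h : EN (prog (.union S T)) D n (.temporal (RPred.G []) τ)) :
    (∃ m, EN (prog (.union S T)) D m (.temporal (RPred.G [false]) τ)) ∨
    (∃ m, EN (prog (.union S T)) D m (.temporal (RPred.G [true]) τ)) := by
  rcases inv_head h with hf | ⟨m, hm, r, hr, hhead, hb, hbody⟩
  · exfalso; obtain ⟨t', h' | ⟨a, h'⟩⟩ := hD _ hf <;> simp at h'
  · simp only [prog, Set.mem_union, Set.mem_image, Set.mem_insert_iff,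
      Set.mem_singleton_iff] at hr
    rcases hr with ((⟨r', hr', rfl⟩ | ⟨r', hr', rfl⟩) | h | h | h | h)
    · exfalso
      rcases prog_head S r' hr' with ⟨pth, hp, _⟩ | ⟨pth, hp⟩ <;>
        simp [mapRule, hp, ren] at hhead
    · exfalso
      rcases prog_head T r' hr' with ⟨pth, hp, _⟩ | ⟨pth, hp⟩ <;>
        simp [mapRule, hp, ren] at hhead
    all_goals subst h
    · simp [link] at hhead
    · simp [link] at hhead
    · refine Or.inl ⟨m, ?_⟩
      have := hbody (RPred.G [false], 0) (by simp [link])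
      simpa using this
    · refine Or.inr ⟨m, ?_⟩
      have := hbody (RPred.G [true], 0) (by simp [link])
      simpa using this

lemma inv_F_union {σ : Type} {S T : RE σ} {D : Set (TFact (RPred σ))}
    (hD : ∀ f ∈ D, ∃ t : ℕ,
      f = TFact.temporal (RPred.F []) t ∨ ∃ a : σ, f = TFact.temporal (RPred.A a) t)
    {b : Bool} {n t : ℕ}
    (h : EN (prog (.union S T)) D n (.temporal (RPred.F [b]) t)) :
    TFact.temporal (RPred.F []) t ∈ D := by
  rcases inv_head h with hf | ⟨m, hm, r, hr, hhead, hb, hbody⟩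
  · exfalso; obtain ⟨t', h' | ⟨a, h'⟩⟩ := hD _ hf <;> simp at h'
  · simp only [prog, Set.mem_union, Set.mem_image, Set.mem_insert_iff,
      Set.mem_singleton_iff] at hr
    rcases hr with ((⟨r', hr', rfl⟩ | ⟨r', hr', rfl⟩) | h | h | h | h)
    · exfalso
      rcases prog_head S r' hr' with ⟨pth, hp, hne⟩ | ⟨pth, hp⟩ <;>
        simp [mapRule, hp, ren] at hhead
      exact hne hhead.2
    · exfalso
      rcases prog_head T r' hr' with ⟨pth, hp, hne⟩ | ⟨pth, hp⟩ <;>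
        simp [mapRule, hp, ren] at hhead
      exact hne hhead.2
    all_goals subst h
    · have := hbody (RPred.F [], 0) (by simp [link])
      simp only [Nat.sub_zero] at this
      exact EN_F_nil (R := .union S T) this
    · have := hbody (RPred.F [], 0) (by simp [link])
      simp only [Nat.sub_zero] at this
      exact EN_F_nil (R := .union S T) this
    · simp [link] at hhead
    · simp [link] at hhead

lemma inv_G_concat {σ : Type} {S T : RE σ} {D : Set (TFact (RPred σ))}
    (hD : ∀ f ∈ D, ∃ t : ℕ,
      f = TFact.temporal (RPred.F []) t ∨ ∃ a : σ, f = TFact.temporal (RPred.A a) t)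
    {n τ : ℕ} (h : EN (prog (.concat S T)) D n (.temporal (RPred.G []) τ)) :
    ∃ m, EN (prog (.concat S T)) D m (.temporal (RPred.G [true]) τ) := by
  rcases inv_head h with hf | ⟨m, hm, r, hr, hhead, hb, hbody⟩
  · exfalso; obtain ⟨t', h' | ⟨a, h'⟩⟩ := hD _ hf <;> simp at h'
  · simp only [prog, Set.mem_union, Set.mem_image, Set.mem_insert_iff,
      Set.mem_singleton_iff] at hr
    rcases hr with ((⟨r', hr', rfl⟩ | ⟨r', hr', rfl⟩) | h | h | h)
    · exfalso
      rcases prog_head S r' hr' with ⟨pth, hp, _⟩ | ⟨pth, hp⟩ <;>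
        simp [mapRule, hp, ren] at hhead
    · exfalso
      rcases prog_head T r' hr' with ⟨pth, hp, _⟩ | ⟨pth, hp⟩ <;>
        simp [mapRule, hp, ren] at hhead
    all_goals subst h
    · simp [link] at hhead
    · simp [link] at hhead
    · refine ⟨m, ?_⟩
      have := hbody (RPred.G [true], 0) (by simp [link])
      simpa using this

lemma inv_Ft_concat {σ : Type} {S T : RE σ} {D : Set (TFact (RPred σ))}
    (hD : ∀ f ∈ D, ∃ t : ℕ,
      f = TFact.temporal (RPred.F []) t ∨ ∃ a : σ, f = TFact.temporal (RPred.A a) t)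
    {n t : ℕ} (h : EN (prog (.concat S T)) D n (.temporal (RPred.F [true]) t)) :
    ∃ m, EN (prog (.concat S T)) D m (.temporal (RPred.G [false]) t) := by
  rcases inv_head h with hf | ⟨m, hm, r, hr, hhead, hb, hbody⟩
  · exfalso; obtain ⟨t', h' | ⟨a, h'⟩⟩ := hD _ hf <;> simp at h'
  · simp only [prog, Set.mem_union, Set.mem_image, Set.mem_insert_iff,
      Set.mem_singleton_iff] at hr
    rcases hr with ((⟨r', hr', rfl⟩ | ⟨r', hr', rfl⟩) | h | h | h)
    · exfalso
      rcases prog_head S r' hr' with ⟨pth, hp, hne⟩ | ⟨pth, hp⟩ <;>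
        simp [mapRule, hp, ren] at hhead
    · exfalso
      rcases prog_head T r' hr' with ⟨pth, hp, hne⟩ | ⟨pth, hp⟩ <;>
        simp [mapRule, hp, ren] at hhead
      exact hne hhead
    all_goals subst h
    · simp [link] at hhead
    · refine ⟨m, ?_⟩
      have := hbody (RPred.G [false], 0) (by simp [link])
      simpa using this
    · simp [link] at hhead

lemma inv_Ff_concat {σ : Type} {S T : RE σ} {D : Set (TFact (RPred σ))}
    (hD : ∀ f ∈ D, ∃ t : ℕ,
      f = TFact.temporal (RPred.F []) t ∨ ∃ a : σ, f = TFact.temporal (RPred.A a) t)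
    {n t : ℕ} (h : EN (prog (.concat S T)) D n (.temporal (RPred.F [false]) t)) :
    TFact.temporal (RPred.F []) t ∈ D := by
  rcases inv_head h with hf | ⟨m, hm, r, hr, hhead, hb, hbody⟩
  · exfalso; obtain ⟨t', h' | ⟨a, h'⟩⟩ := hD _ hf <;> simp at h'
  · simp only [prog, Set.mem_union, Set.mem_image, Set.mem_insert_iff,
      Set.mem_singleton_iff] at hr
    rcases hr with ((⟨r', hr', rfl⟩ | ⟨r', hr', rfl⟩) | h | h | h)
    · exfalso
      rcases prog_head S r' hr' with ⟨pth, hp, hne⟩ | ⟨pth, hp⟩ <;>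
        simp [mapRule, hp, ren] at hhead
      exact hne hhead
    · exfalso
      rcases prog_head T r' hr' with ⟨pth, hp, hne⟩ | ⟨pth, hp⟩ <;>
        simp [mapRule, hp, ren] at hhead
    all_goals subst h
    · have := hbody (RPred.F [], 0) (by simp [link])
      simp only [Nat.sub_zero] at this
      exact EN_F_nil (R := .concat S T) this
    · simp [link] at hhead
    · simp [link] at hhead

lemma inv_G_plus {σ : Type} {S : RE σ} {D : Set (TFact (RPred σ))}
    (hD : ∀ f ∈ D, ∃ t : ℕ,
      f = TFact.temporal (RPred.F []) t ∨ ∃ a : σ, f = TFact.temporal (RPred.A a) t)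
    {n τ : ℕ} (h : EN (prog (.plus S)) D n (.temporal (RPred.G []) τ)) :
    ∃ m, EN (prog (.plus S)) D m (.temporal (RPred.G [false]) τ) := by
  rcases inv_head h with hf | ⟨m, hm, r, hr, hhead, hb, hbody⟩
  · exfalso; obtain ⟨t', h' | ⟨a, h'⟩⟩ := hD _ hf <;> simp at h'
  · simp only [prog, Set.mem_union, Set.mem_image, Set.mem_insert_iff,
      Set.mem_singleton_iff] at hr
    rcases hr with (⟨r', hr', rfl⟩ | h | h | h)
    · exfalso
      rcases prog_head S r' hr' with ⟨pth, hp, _⟩ | ⟨pth, hp⟩ <;>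
        simp [mapRule, hp, ren] at hhead
    all_goals subst h
    · simp [link] at hhead
    · simp [link] at hhead
    · refine ⟨m, ?_⟩
      have := hbody (RPred.G [false], 0) (by simp [link])
      simpa using this

lemma inv_Ff_plus {σ : Type} {S : RE σ} {D : Set (TFact (RPred σ))}
    (hD : ∀ f ∈ D, ∃ t : ℕ,
      f = TFact.temporal (RPred.F []) t ∨ ∃ a : σ, f = TFact.temporal (RPred.A a) t)
    {n t : ℕ} (h : EN (prog (.plus S)) D n (.temporal (RPred.F [false]) t)) :
    TFact.temporal (RPred.F []) t ∈ D ∨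
      ∃ m, m < n ∧ EN (prog (.plus S)) D m (.temporal (RPred.G [false]) t) := by
  rcases inv_head h with hf | ⟨m, hm, r, hr, hhead, hb, hbody⟩
  · exfalso; obtain ⟨t', h' | ⟨a, h'⟩⟩ := hD _ hf <;> simp at h'
  · simp only [prog, Set.mem_union, Set.mem_image, Set.mem_insert_iff,
      Set.mem_singleton_iff] at hr
    rcases hr with (⟨r', hr', rfl⟩ | h | h | h)
    · exfalso
      rcases prog_head S r' hr' with ⟨pth, hp, hne⟩ | ⟨pth, hp⟩ <;>
        simp [mapRule, hp, ren] at hhead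
      exact hne hhead
    all_goals subst h
    · refine Or.inl ?_
      have := hbody (RPred.F [], 0) (by simp [link])
      simp only [Nat.sub_zero] at this
      exact EN_F_nil (R := .plus S) this
    · refine Or.inr ⟨m, hm, ?_⟩
      have := hbody (RPred.G [false], 0) (by simp [link])
      simpa using this
    · simp [link] at hhead

/-! #### Combining words -/

lemma lang_plus_append {σ : Type} {S : RE σ} :
    ∀ {w : List σ}, Lang (.plus S) w → ∀ {u : List σ}, Lang S u →
      Lang (.plus S) (w ++ u) := by
  suffices H : ∀ (T : RE σ) (w : List σ), Lang T w → T = .plus S →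
      ∀ {u : List σ}, Lang S u → Lang (.plus S) (w ++ u) by
    intro w hw u hu; exact H _ _ hw rfl hu
  intro T w hw
  induction hw with
  | eps => intro h; exact absurd h (by simp)
  | char a => intro h; exact absurd h (by simp)
  | unionL _ _ => intro h; exact absurd h (by simp)
  | unionR _ _ => intro h; exact absurd h (by simp)
  | concat _ _ _ _ => intro h; exact absurd h (by simp)
  | @plusOne S' w' hw' _ =>
      rintro h u hu
      injection h with hS
      subst hS
      exact Lang.plusMore hw' (Lang.plusOne hu)
  | @plusMore S' a b ha hb iha ihb =>
      rintro h u hu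
      injection h with hS
      subst hS
      rw [List.append_assoc]
      exact Lang.plusMore ha (ihb rfl hu)

lemma good_append {σ : Type} {D : Set (TFact (RPred σ))} {u v : List σ} {t : ℕ}
    (hvlen : v.length ≤ t)
    (hulen : u.length ≤ t - v.length)
    (huF : TFact.temporal (RPred.F []) (t - v.length - u.length) ∈ D)
    (huA : ∀ i : Fin u.length,
      TFact.temporal (RPred.A (u.get i)) (t - v.length - u.length + i) ∈ D)
    (hvA : ∀ i : Fin v.length,
      TFact.temporal (RPred.A (v.get i)) (t - v.length + i) ∈ D) :
    (u ++ v).length ≤ t ∧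
      TFact.temporal (RPred.F []) (t - (u ++ v).length) ∈ D ∧
      ∀ i : Fin (u ++ v).length,
        TFact.temporal (RPred.A ((u ++ v).get i)) (t - (u ++ v).length + i) ∈ D := by
  have hlen : (u ++ v).length = u.length + v.length := by simp
  refine ⟨by omega, ?_, ?_⟩
  · have : t - (u.length + v.length) = t - v.length - u.length := by omega
    rw [hlen, this]; exact huF
  · intro i
    have hiLt : (i : ℕ) < u.length + v.length := by
      have := i.isLt; omega
    rcases lt_or_ge (i : ℕ) u.length with hi | hi
    · have hget : (u ++ v).get i = u.get ⟨i, hi⟩ := by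
        simp only [List.get_eq_getElem]
        rw [List.getElem_append_left]
      have hmem := huA ⟨i, hi⟩
      have hXY : TFact.temporal (RPred.A ((u ++ v).get i))
            (t - (u ++ v).length + (i : ℕ))
          = TFact.temporal (RPred.A (u.get ⟨i, hi⟩))
            (t - v.length - u.length + (i : ℕ)) := by
        rw [hget]
        congr 1
        omega
      rw [hXY]
      exact hmem
    · have hi2 : (i : ℕ) - u.length < v.length := by omega
      have hget : (u ++ v).get i = v.get ⟨(i : ℕ) - u.length, hi2⟩ := by
        simp only [List.get_eq_getElem]
        rw [List.getElem_append_right] <;> omega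
      have hmem := hvA ⟨(i : ℕ) - u.length, hi2⟩
      have hXY : TFact.temporal (RPred.A ((u ++ v).get i))
            (t - (u ++ v).length + (i : ℕ))
          = TFact.temporal (RPred.A (v.get ⟨(i : ℕ) - u.length, hi2⟩))
            (t - v.length + ((i : ℕ) - u.length)) := by
        rw [hget]
        congr 1
        omega
      rw [hXY]
      exact hmem

/-- Completeness of the regular-expression encoding: if `Π_R ∪ D ⊨ G(τ)` for a
dataset `D` over the EDB predicates `F` and `A_σ`, then there is a word
`σ₁…σₙ ∈ L(R)` with `F(τ−n) ∈ D` and `A_{σᵢ}(τ−n+i−1) ∈ D` for `1 ≤ i ≤ n`. -/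
theorem regex_encoding_complete {σ : Type} (R : RE σ) (τ : ℕ)
    (D : Set (TFact (RPred σ)))
    (hD : ∀ f ∈ D, ∃ t : ℕ,
      f = TFact.temporal (RPred.F []) t ∨ ∃ a : σ, f = TFact.temporal (RPred.A a) t)
    (h : Entails (∅ : Set (RigidRule (RPred σ))) (prog R) D
      (.temporal (RPred.G []) τ)) :
    ∃ w : List σ, Lang R w ∧ w.length ≤ τ ∧
      TFact.temporal (RPred.F []) (τ - w.length) ∈ D ∧
      ∀ i : Fin w.length,
        TFact.temporal (RPred.A (w.get i)) (τ - w.length + i) ∈ D := by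
  induction R generalizing τ D hD with
  | empty =>
      obtain ⟨n, hn⟩ := toEN (hD_temp hD) h
      rcases inv_head hn with hf | ⟨m, _, r, hr, _⟩
      · exact absurd (hD _ hf) (by rintro ⟨t', h' | ⟨a, h'⟩⟩ <;> simp at h')
      · simp [prog] at hr
  | eps =>
      obtain ⟨n, hn⟩ := toEN (hD_temp hD) h
      rcases inv_head hn with hf | ⟨m, _, r, hr, hhead, hb, hbody⟩
      · exact absurd (hD _ hf) (by rintro ⟨t', h' | ⟨a, h'⟩⟩ <;> simp at h')
      · simp only [prog, Set.mem_singleton_iff] at hr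
        subst hr
        have hbF := hbody (RPred.F [], 0) (by simp [link])
        simp only [Nat.sub_zero] at hbF
        have hF : TFact.temporal (RPred.F []) τ ∈ D := EN_F_nil (R := .eps) hbF
        exact ⟨[], Lang.eps, Nat.zero_le _, by simpa using hF, fun i => i.elim0⟩
  | char a =>
      obtain ⟨n, hn⟩ := toEN (hD_temp hD) h
      rcases inv_head hn with hf | ⟨m, _, r, hr, hhead, hb, hbody⟩
      · exact absurd (hD _ hf) (by rintro ⟨t', h' | ⟨a, h'⟩⟩ <;> simp at h')
      · simp only [prog, Set.mem_singleton_iff] at hr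
        subst hr
        have h1 : 1 ≤ τ := hb (RPred.F [], 1) (by simp)
        have hbF := hbody (RPred.F [], 1) (by simp)
        have hbA := hbody (RPred.A a, 1) (by simp)
        have hF : TFact.temporal (RPred.F []) (τ - 1) ∈ D :=
          EN_F_nil (R := .char a) hbF
        have hA : TFact.temporal (RPred.A a) (τ - 1) ∈ D :=
          EN_A (R := .char a) hbA
        refine ⟨[a], Lang.char a, by simpa using h1, by simpa using hF, ?_⟩
        intro i
        fin_cases i
        simpa using hA
  | union S T ihS ihT =>
      obtain ⟨n, hn⟩ := toEN (hD_temp hD) h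
      rcases inv_G_union hD hn with ⟨m, hm⟩ | ⟨m, hm⟩
      · have hu' := unren hD (hW_union_left S T) hm (RPred.G []) τ rfl
        obtain ⟨w, hw, hlen, hF, hA⟩ := ihS τ _ Dp_hD hu'
        obtain ⟨m', _, hEN⟩ := Dp_F hF
        exact ⟨w, Lang.unionL hw, hlen, inv_F_union hD hEN,
          fun i => Dp_A (hA i)⟩
      · have hu' := unren hD (hW_union_right S T) hm (RPred.G []) τ rfl
        obtain ⟨w, hw, hlen, hF, hA⟩ := ihT τ _ Dp_hD hu'
        obtain ⟨m', _, hEN⟩ := Dp_F hF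
        exact ⟨w, Lang.unionR hw, hlen, inv_F_union hD hEN,
          fun i => Dp_A (hA i)⟩
  | concat S T ihS ihT =>
      obtain ⟨n, hn⟩ := toEN (hD_temp hD) h
      obtain ⟨m, hm⟩ := inv_G_concat hD hn
      have hv' := unren hD (hW_concat_right S T) hm (RPred.G []) τ rfl
      obtain ⟨v, hv, hvlen, hvF, hvA⟩ := ihT τ _ Dp_hD hv'
      obtain ⟨m1, _, hEN1⟩ := Dp_F hvF
      obtain ⟨m2, hEN2⟩ := inv_Ft_concat hD hEN1
      have hu' := unren hD (hW_concat_left S T) hEN2 (RPred.G []) (τ - v.length) rfl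
      obtain ⟨u, hu, hulen, huF, huA⟩ := ihS (τ - v.length) _ Dp_hD hu'
      obtain ⟨m3, _, hEN3⟩ := Dp_F huF
      have huFD := inv_Ff_concat hD hEN3
      have hG := good_append (D := D) hvlen hulen huFD
        (fun i => Dp_A (huA i)) (fun i => Dp_A (hvA i))
      exact ⟨u ++ v, Lang.concat hu hv, hG.1, hG.2.1, hG.2.2⟩
  | plus S ihS =>
      obtain ⟨n0, hn0⟩ := toEN (hD_temp hD) h
      have key : ∀ n t, EN (prog (.plus S)) D n (.temporal (RPred.G [false]) t) →
          ∃ w, Lang (.plus S) w ∧ w.length ≤ t ∧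
            TFact.temporal (RPred.F []) (t - w.length) ∈ D ∧
            ∀ i : Fin w.length,
              TFact.temporal (RPred.A (w.get i)) (t - w.length + i) ∈ D := by
        intro n
        induction n using Nat.strong_induction_on with
        | _ n IH =>
            intro t hGf
            have hu' := unren hD (hW_plus S) hGf (RPred.G []) t rfl
            obtain ⟨u, hu, hulen, huF, huA⟩ := ihS t _ Dp_hD hu'
            obtain ⟨m, hmn, hENF⟩ := Dp_F huF
            rcases inv_Ff_plus hD hENF with hFD | ⟨m2, hm2, hGf2⟩
            · exact ⟨u, Lang.plusOne hu, hulen, hFD, fun i => Dp_A (huA i)⟩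
            · obtain ⟨w, hw, hwlen, hwF, hwA⟩ := IH m2 (by omega) (t - u.length) hGf2
              have hG := good_append (D := D) hulen hwlen hwF hwA
                (fun i => Dp_A (huA i))
              exact ⟨w ++ u, lang_plus_append hw hu, hG.1, hG.2.1, hG.2.2⟩
      obtain ⟨m, hm⟩ := inv_G_plus hD hn0
      exact key m τ hm
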